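/- Suppose D is an uncountable subset of a space X that is closed, and there exists a locally countable separation of D, i.e., a pairwise disjoint family {U_d : d ∈ D} of open sets with d ∈ U_d such that every point of X has a neighbourhood meeting only countably many U_d. Then X is not star-Lindelöf. -/
import Mathlib


open Set

/-- The dominating number 𝔡: least cardinality of a dominating family in ℕ^ℕ. -/
noncomputable def dominatingNumber : Cardinal :=
  sInf { c | ∃ D : Set (ℕ → ℕ),
    (∀ g : ℕ → ℕ, ∃ f ∈ D, ∀ᶠ n in Filter.atTop, g n ≤ f n) ∧ c = Cardinal.mk D }

/-- `U` is an open cover of the space `X`. -/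
def IsOpenCover {X : Type*} [TopologicalSpace X] (U : Set (Set X)) : Prop :=
  (∀ u ∈ U, IsOpen u) ∧ ⋃₀ U = Set.univ

/-- The star of a set `A` with respect to a family `U`. -/
def starOf {X : Type*} (A : Set X) (U : Set (Set X)) : Set X :=
  ⋃₀ {B | B ∈ U ∧ (A ∩ B).Nonempty}

/-- The star-Scheepers property (ω-cover form). -/
def StarScheepers (X : Type*) [TopologicalSpace X] : Prop :=
  ∀ U : ℕ → Set (Set X), (∀ n, IsOpenCover (U n)) →
    ∃ V : ℕ → Set (Set X), (∀ n, V n ⊆ U n ∧ (V n).Finite) ∧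
      ∀ F : Set X, F.Finite → ∃ n, F ⊆ starOf (⋃₀ V n) (U n)

/-- The strongly star-Scheepers property. -/
def StronglyStarScheepers (X : Type*) [TopologicalSpace X] : Prop :=
  ∀ U : ℕ → Set (Set X), (∀ n, IsOpenCover (U n)) →
    ∃ F : ℕ → Set X, (∀ n, (F n).Finite) ∧
      ∀ G : Set X, G.Finite → ∃ n, G ⊆ starOf (F n) (U n)

theorem stmt_18 {X : Type*} [TopologicalSpace X]
    (D : Set X) (hDc : ¬ D.Countable) (hDcl : IsClosed D)
    (U : X → Set X)
    (hUopen : ∀ d ∈ D, IsOpen (U d)) (hUmem : ∀ d ∈ D, d ∈ U d)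
    (hUdisj : ∀ d ∈ D, ∀ e ∈ D, d ≠ e → Disjoint (U d) (U e))
    (hloc : ∀ x : X, ∃ N ∈ nhds x, {d ∈ D | (N ∩ U d).Nonempty}.Countable) :
    ¬ (∀ W : Set (Set X), IsOpenCover W →
        ∃ V ⊆ W, V.Countable ∧ starOf (⋃₀ V) W = Set.univ) := by
  intro h
  choose N hN hNc using hloc
  have hO : ∀ x : X, ∃ t, t ⊆ N x ∧ IsOpen t ∧ x ∈ t := fun x =>
    mem_nhds_iff.mp (hN x)
  choose O hON hOopen hOx using hO
  set W : Set (Set X) := {s | (∃ d ∈ D, s = U d) ∨ (∃ x : X, s = O x \ D)} with hW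
  have hWcov : IsOpenCover W := by
    constructor
    · rintro u (⟨d, hd, rfl⟩ | ⟨x, rfl⟩)
      · exact hUopen d hd
      · exact (hOopen x).sdiff hDcl
    · apply Set.eq_univ_of_forall
      intro y
      by_cases hy : y ∈ D
      · exact ⟨U y, Or.inl ⟨y, hy, rfl⟩, hUmem y hy⟩
      · exact ⟨O y \ D, Or.inr ⟨y, rfl⟩, hOx y, hy⟩
  obtain ⟨V, hVW, hVc, hVstar⟩ := h W hWcov
  set S : Set X := {d ∈ D | ((⋃₀ V) ∩ U d).Nonempty} with hS
  have hSc : S.Countable := by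
    have hsub : S ⊆ ⋃ B ∈ V, {d ∈ D | (B ∩ U d).Nonempty} := by
      rintro d ⟨hdD, z, ⟨B, hBV, hzB⟩, hzU⟩
      exact Set.mem_biUnion hBV ⟨hdD, z, hzB, hzU⟩
    refine Set.Countable.mono hsub (Set.Countable.biUnion hVc ?_)
    intro B hBV
    rcases hVW hBV with ⟨e, he, rfl⟩ | ⟨x, rfl⟩
    · refine Set.Countable.mono ?_ (Set.countable_singleton e)
      rintro d ⟨hdD, z, hz1, hz2⟩
      by_contra hne
      exact (hUdisj d hdD e he (fun h' => hne (by simp [h']))).ne_of_mem hz2 hz1 rfl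
    · refine Set.Countable.mono ?_ (hNc x)
      rintro d ⟨hdD, z, hz1, hz2⟩
      exact ⟨hdD, z, hON x hz1.1, hz2⟩
  have : ∃ d ∈ D, d ∉ S := by
    by_contra hc
    push_neg at hc
    exact hDc (hSc.mono hc)
  obtain ⟨d, hdD, hdS⟩ := this
  have hd : d ∈ starOf (⋃₀ V) W := hVstar ▸ Set.mem_univ d
  obtain ⟨B, ⟨hBW, hBne⟩, hdB⟩ := hd
  rcases hBW with ⟨e, he, rfl⟩ | ⟨x, rfl⟩
  · have hed : e = d := by
      by_contra hne
      exact (hUdisj d hdD e he (fun h' => hne h'.symm)).ne_of_mem (hUmem d hdD) hdB rfl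
    exact hdS ⟨hdD, hed ▸ hBne⟩
  · exact hdB.2 hdD
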